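/- arXiv:1412.4456 — 2 statements merged into one kernel-verified Lean document; each statement's English description precedes it below -/
import Mathlib

section
/- For every uniform, budget-balanced, stable cost sharing protocol ξ on the player set N = {1,…,n} (n ≥ 2) and every ε ∈ (0,1), there exists an n-player resource allocation model with anonymous convex cost functions such that, in the induced cost sharing game with cost shares given by ξ, every pure Nash equilibrium P satisfies C(P) ≥ (n − ε) · C(Q̂), where Q̂ is a socially optimal strategy vector with C(Q̂) > 0; hence the price of stability under ξ is at least n − ε. -/
open Finset

/-- A valid resource cost function: nonnegative, nondecreasing, zero at `∅`. -/
def IsCostFn (n : ℕ) (C : Finset (Fin n) → ℝ) : Prop :=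
  C ∅ = 0 ∧ (∀ T, 0 ≤ C T) ∧ ∀ T U : Finset (Fin n), T ⊆ U → C T ≤ C U

/-- An anonymous cost function depends only on the number of users. -/
def AnonymousCost (n : ℕ) (C : Finset (Fin n) → ℝ) : Prop :=
  ∀ X Y : Finset (Fin n), X.card = Y.card → C X = C Y

/-- A convex (supermodular) cost function. -/
def ConvexCost (n : ℕ) (C : Finset (Fin n) → ℝ) : Prop :=
  ∀ (X Y : Finset (Fin n)) (i : Fin n), X ⊆ Y → i ∉ Y →
    C (insert i X) - C X ≤ C (insert i Y) - C Y

/-- A (uniform) cost sharing protocol: it assigns to every cost function `C`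
and every set `S` of users a cost share for each player, depending only on
this local information. -/
abbrev Protocol (n : ℕ) := (Finset (Fin n) → ℝ) → Finset (Fin n) → Fin n → ℝ

/-- `users P r = P^r = {i : r ∈ P_i}`, the set of players using resource `r`. -/
def users {n : ℕ} {R : Type*} [DecidableEq R]
    (P : Fin n → Finset R) (r : R) : Finset (Fin n) :=
  Finset.univ.filter (fun i => r ∈ P i)

/-- The private cost of player `i` under protocol `ξ`:
`C_i(P) = Σ_{r ∈ P_i} ξ_i(C^r, P^r)`. -/
def privCost {n : ℕ} {R : Type*} [DecidableEq R] (ξ : Protocol n)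
    (Cr : R → Finset (Fin n) → ℝ) (P : Fin n → Finset R) (i : Fin n) : ℝ :=
  ∑ r ∈ P i, ξ (Cr r) (users P r) i

/-- The social cost `C(P) = Σ_{r ∈ R} C^r(P^r)`. -/
def socCost {n : ℕ} {R : Type*} [Fintype R] [DecidableEq R]
    (Cr : R → Finset (Fin n) → ℝ) (P : Fin n → Finset R) : ℝ :=
  ∑ r : R, Cr r (users P r)

/-- `P` is a pure Nash equilibrium of the game induced by protocol `ξ`. -/
def isPNE {n : ℕ} {R : Type*} [DecidableEq R] (Strat : Fin n → Set (Finset R))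
    (ξ : Protocol n) (Cr : R → Finset (Fin n) → ℝ) (P : Fin n → Finset R) : Prop :=
  (∀ i, P i ∈ Strat i) ∧
    ∀ i, ∀ Q ∈ Strat i, privCost ξ Cr P i ≤ privCost ξ Cr (Function.update P i Q) i

/-- Cost shares are nonnegative and only users pay. -/
def ValidShares {n : ℕ} (ξ : Protocol n) : Prop :=
  ∀ C : Finset (Fin n) → ℝ, IsCostFn n C →
    ∀ (S : Finset (Fin n)) (i : Fin n), 0 ≤ ξ C S i ∧ (i ∉ S → ξ C S i = 0)

/-- The protocol is budget-balanced. -/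
def BudgetBalanced {n : ℕ} (ξ : Protocol n) : Prop :=
  ∀ C : Finset (Fin n) → ℝ, IsCostFn n C →
    ∀ S : Finset (Fin n), ∑ i ∈ S, ξ C S i = C S

/-- The protocol is stable: every induced cost sharing game admits a pure
Nash equilibrium. -/
def StableProtocol {n : ℕ} (ξ : Protocol n) : Prop :=
  ∀ (R : Type) [Fintype R] [DecidableEq R]
    (Strat : Fin n → Set (Finset R)) (Cr : R → Finset (Fin n) → ℝ),
    (∀ i, (Strat i).Nonempty) → (∀ r, IsCostFn n (Cr r)) →
    ∃ P : Fin n → Finset R, isPNE Strat ξ Cr P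

/-- `H_k`, the `k`-th harmonic number. -/
noncomputable def harmonicNum (k : ℕ) : ℝ := ∑ l ∈ Finset.Icc 1 k, (1 / (l : ℝ))


/-- step cost: 1 if everyone uses, else 0 -/
noncomputable def stepCost (n : ℕ) : Finset (Fin n) → ℝ :=
  fun S => if S = Finset.univ then 1 else 0

noncomputable def linCost (n : ℕ) (c : ℝ) : Finset (Fin n) → ℝ :=
  fun S => c * S.card

lemma stepCost_isCostFn (n : ℕ) (hn : 0 < n) : IsCostFn n (stepCost n) := by
  refine ⟨?_, ?_, ?_⟩
  · have : (∅ : Finset (Fin n)) ≠ Finset.univ := by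
      intro h
      have : (⟨0, hn⟩ : Fin n) ∈ (∅ : Finset (Fin n)) := h ▸ Finset.mem_univ _
      simp at this
    simp [stepCost, this]
  · intro T; unfold stepCost; split_ifs <;> norm_num
  · intro T U hTU
    unfold stepCost
    split_ifs with h1 h2 h2 <;> try norm_num
    exact h2 (Finset.univ_subset_iff.1 (h1 ▸ hTU))

lemma stepCost_anonymous (n : ℕ) : AnonymousCost n (stepCost n) := by
  intro X Y hXY
  unfold stepCost
  have h : X = Finset.univ ↔ Y = Finset.univ := by
    constructor <;> intro h
    · apply Finset.eq_univ_of_card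
      rw [← hXY, h]; simp
    · apply Finset.eq_univ_of_card
      rw [hXY, h]; simp
  split_ifs with h1 h2 h2 <;> first | rfl | (exact absurd (h.1 h1) h2) | (exact absurd (h.2 h2) h1)

lemma stepCost_convex (n : ℕ) : ConvexCost n (stepCost n) := by
  intro X Y i hXY hiY
  rcases eq_or_ne (insert i X) Finset.univ with hX | hX
  · have hYX : Y ⊆ X := by
      intro j hj
      have hj' : j ∈ insert i X := hX ▸ Finset.mem_univ j
      rcases Finset.mem_insert.1 hj' with h | h
      · exact absurd (h ▸ hj) hiY
      · exact h
    have : X = Y := Finset.Subset.antisymm hXY hYX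
    rw [this]
  · have hXne : X ≠ Finset.univ := by
      intro h
      exact hiY (hXY (h ▸ Finset.mem_univ i))
    have hYne : Y ≠ Finset.univ := by
      intro h
      exact hiY (h ▸ Finset.mem_univ i)
    unfold stepCost
    rw [if_neg hX, if_neg hXne, if_neg hYne]
    split_ifs <;> norm_num

lemma linCost_isCostFn (n : ℕ) (c : ℝ) (hc : 0 ≤ c) : IsCostFn n (linCost n c) := by
  refine ⟨by simp [linCost], fun T => mul_nonneg hc (by positivity), fun T U h => ?_⟩
  unfold linCost
  have h2 : (T.card:ℝ) ≤ U.card := by exact_mod_cast Finset.card_le_card h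
  exact mul_le_mul_of_nonneg_left h2 hc

lemma linCost_anonymous (n : ℕ) (c : ℝ) : AnonymousCost n (linCost n c) := by
  intro X Y h; simp [linCost, h]

lemma linCost_convex (n : ℕ) (c : ℝ) : ConvexCost n (linCost n c) := by
  intro X Y i hXY hiY
  have hiX : i ∉ X := fun h => hiY (hXY h)
  have h1 : ((insert i X).card : ℝ) = (X.card:ℝ) + 1 := by
    simp [Finset.card_insert_of_notMem hiX]
  have h2 : ((insert i Y).card : ℝ) = (Y.card:ℝ) + 1 := by
    simp [Finset.card_insert_of_notMem hiY]
  have key : ∀ x : ℝ, c * (x + 1) - c * x = c := fun x => by ring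
  unfold linCost
  rw [h1, h2]
  linarith [key (X.card:ℝ), key (Y.card:ℝ)]

/-- No uniform cost sharing protocol has price of stability below `n - ε` on
games with anonymous convex costs. -/
theorem uniform_pos_lower_bound_supermodular {n : ℕ} (hn : 2 ≤ n)
    (ξ : Protocol n) (hξ : ValidShares ξ) (hbb : BudgetBalanced ξ)
    (hstable : StableProtocol ξ)
    (ε : ℝ) (hε : ε ∈ Set.Ioo (0 : ℝ) 1) :
    ∃ (m : ℕ) (Strat : Fin n → Set (Finset (Fin m)))
      (Cr : Fin m → Finset (Fin n) → ℝ),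
      (∀ i, (Strat i).Nonempty) ∧ (∀ r, IsCostFn n (Cr r)) ∧
      (∀ r, AnonymousCost n (Cr r)) ∧
      (∀ r, ConvexCost n (Cr r)) ∧
      ∃ Qopt : Fin n → Finset (Fin m),
        (∀ i, Qopt i ∈ Strat i) ∧
        (∀ Q : Fin n → Finset (Fin m), (∀ i, Q i ∈ Strat i) →
          socCost Cr Qopt ≤ socCost Cr Q) ∧
        0 < socCost Cr Qopt ∧
        ∀ P : Fin n → Finset (Fin m), isPNE Strat ξ Cr P →
          ((n : ℝ) - ε) * socCost Cr Qopt ≤ socCost Cr P := by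
  classical
  obtain ⟨hε0, hε1⟩ := hε
  have hn0 : 0 < n := by omega
  have hnR : (2:ℝ) ≤ (n:ℝ) := by exact_mod_cast hn
  have hnR0 : (0:ℝ) < (n:ℝ) := by linarith
  have hne0 : (n:ℝ) ≠ 0 := ne_of_gt hnR0
  have hCzfn : IsCostFn n (stepCost n) := stepCost_isCostFn n hn0
  set q : Fin n → ℝ := fun i => ξ (stepCost n) Finset.univ i with hqdef
  have hqsum : ∑ i, q i = 1 := by
    have h := hbb (stepCost n) hCzfn Finset.univ
    simp only [hqdef]
    simpa [stepCost] using h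
  have hq0 : ∀ i, 0 ≤ q i := by
    intro i
    simp only [hqdef]
    exact (hξ (stepCost n) hCzfn Finset.univ i).1
  have hq1 : ∀ i, q i ≤ 1 := by
    intro i
    have h := Finset.single_le_sum (f := q) (fun j _ => hq0 j) (Finset.mem_univ i)
    rw [hqsum] at h
    exact h
  obtain ⟨istar, -, hmin⟩ :=
    Finset.exists_min_image Finset.univ q ⟨⟨0, hn0⟩, Finset.mem_univ _⟩
  have hqstar : (n:ℝ) * q istar ≤ 1 := by
    have h := Finset.card_nsmul_le_sum Finset.univ q (q istar)
      (fun j _ => hmin j (Finset.mem_univ j))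
    rw [hqsum] at h
    simpa [Finset.card_univ, nsmul_eq_mul] using h
  set δ : ℝ := ε / (n:ℝ)^2 with hδdef
  have hδ0 : 0 < δ := by rw [hδdef]; positivity
  have hδ4 : δ ≤ 1/4 := by
    rw [hδdef, div_le_iff₀ (by positivity)]
    nlinarith [sq_nonneg ((n:ℝ) - 2)]
  set a : Fin n → ℝ := fun i => if i = istar then q istar + δ else 2 with hadef
  have hastar : a istar = q istar + δ := by simp only [hadef, if_pos rfl]
  have hstar1 : a istar ≤ 1 := by
    rw [hastar]
    nlinarith [hq0 istar, hqstar, hδ4, hnR,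
      mul_nonneg (by linarith : (0:ℝ) ≤ (n:ℝ) - 2) (hq0 istar)]
  have ha0 : ∀ i, 0 < a i := by
    intro i
    simp only [hadef]
    split_ifs
    · linarith [hq0 istar]
    · norm_num
  have haq : ∀ i, q i < a i := by
    intro i
    simp only [hadef]
    split_ifs with h
    · rw [h]; linarith
    · linarith [hq1 i]
  have hastar_le : ∀ i, a istar ≤ a i := by
    intro i
    by_cases h : i = istar
    · rw [h]
    · rw [hastar]
      simp only [hadef, if_neg h]
      linarith [hstar1, hδ0, hq0 istar]
  -- the game
  set Cr : Fin (n+1) → Finset (Fin n) → ℝ :=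
    fun r => if h : r = 0 then stepCost n else linCost n (a (r.pred h)) with hCrdef
  set Strat : Fin n → Set (Finset (Fin (n+1))) :=
    fun i => {{(0 : Fin (n+1))}, {Fin.succ i}} with hSdef
  have hCr0 : Cr 0 = stepCost n := by simp only [hCrdef, dif_pos rfl]
  have hCrs : ∀ i : Fin n, Cr (Fin.succ i) = linCost n (a i) := by
    intro i
    simp only [hCrdef, dif_neg (Fin.succ_ne_zero i), Fin.pred_succ]
  have hmem : ∀ (P : Fin n → Finset (Fin (n+1))), (∀ i, P i ∈ Strat i) →
      ∀ i, P i = {0} ∨ P i = {Fin.succ i} := by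
    intro P hP i
    have h := hP i
    simpa [hSdef] using h
  have husers0 : ∀ (P : Fin n → Finset (Fin (n+1))), (∀ i, P i ∈ Strat i) →
      users P 0 = Finset.univ.filter (fun j => P j = {0}) := by
    intro P hP
    ext j
    simp only [users, Finset.mem_filter, Finset.mem_univ, true_and]
    constructor
    · intro h0
      rcases hmem P hP j with h | h
      · exact h
      · rw [h, Finset.mem_singleton] at h0
        exact absurd h0.symm (Fin.succ_ne_zero j)
    · intro h
      rw [h]
      exact Finset.mem_singleton_self _
  have husersY : ∀ (P : Fin n → Finset (Fin (n+1))), (∀ i, P i ∈ Strat i) → ∀ i : Fin n,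
      users P (Fin.succ i) = if P i = {Fin.succ i} then ({i} : Finset (Fin n)) else ∅ := by
    intro P hP i
    ext j
    simp only [users, Finset.mem_filter, Finset.mem_univ, true_and]
    constructor
    · intro hj
      rcases hmem P hP j with h | h
      · rw [h, Finset.mem_singleton] at hj
        exact absurd hj (Fin.succ_ne_zero i)
      · rw [h, Finset.mem_singleton] at hj
        have hij : i = j := Fin.succ_injective n hj
        subst hij
        rw [if_pos h]
        exact Finset.mem_singleton_self _
    · intro hj
      split_ifs at hj with h
      · rw [Finset.mem_singleton] at hj
        subst hj
        rw [h]
        exact Finset.mem_singleton_self _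
      · simp at hj
  have hlinfn : ∀ i : Fin n, IsCostFn n (linCost n (a i)) :=
    fun i => linCost_isCostFn n (a i) (ha0 i).le
  have hpriv_y : ∀ P, (∀ i, P i ∈ Strat i) → ∀ i, P i = {Fin.succ i} →
      privCost ξ Cr P i = a i := by
    intro P hP i hPi
    have hu : users P (Fin.succ i) = {i} := by
      rw [husersY P hP i, if_pos hPi]
    unfold privCost
    rw [hPi, Finset.sum_singleton, hu, hCrs i]
    have h := hbb (linCost n (a i)) (hlinfn i) {i}
    rw [Finset.sum_singleton] at h
    rw [h]
    simp [linCost]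
  have hz_zero : ∀ S : Finset (Fin n), S ≠ Finset.univ → ∀ i, ξ (stepCost n) S i = 0 := by
    intro S hS i
    by_cases hi : i ∈ S
    · have hsum : ∑ j ∈ S, ξ (stepCost n) S j = 0 := by
        have h := hbb (stepCost n) hCzfn S
        rw [h]
        simp [stepCost, hS]
      exact (Finset.sum_eq_zero_iff_of_nonneg
        (fun j _ => (hξ _ hCzfn S j).1)).1 hsum i hi
    · exact (hξ _ hCzfn S i).2 hi
  have hPNE_all : ∀ P, isPNE Strat ξ Cr P → ∀ i, P i = {0} := by
    intro P hPNE i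
    rcases hmem P hPNE.1 i with h | h
    · exact h
    exfalso
    have hcur : privCost ξ Cr P i = a i := hpriv_y P hPNE.1 i h
    have hm0 : ({0} : Finset (Fin (n+1))) ∈ Strat i := by simp [hSdef]
    have hdev := hPNE.2 i {0} hm0
    set P' := Function.update P i ({0} : Finset (Fin (n+1))) with hP'def
    have hP'i : P' i = {0} := by rw [hP'def]; simp
    have hpc' : privCost ξ Cr P' i = ξ (stepCost n) (users P' 0) i := by
      unfold privCost
      rw [hP'i, Finset.sum_singleton, hCr0]
    have hlt : ξ (stepCost n) (users P' 0) i < a i := by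
      by_cases hU : users P' 0 = Finset.univ
      · rw [hU]
        have h2 := haq i
        rw [hqdef] at h2
        exact h2
      · rw [hz_zero _ hU i]
        exact ha0 i
    rw [hcur, hpc'] at hdev
    linarith
  have hsoc : ∀ P, (∀ i, P i ∈ Strat i) →
      socCost Cr P = stepCost n (users P 0) +
        ∑ i : Fin n, (if P i = {Fin.succ i} then a i else 0) := by
    intro P hP
    unfold socCost
    rw [Fin.sum_univ_succ, hCr0]
    congr 1
    apply Finset.sum_congr rfl
    intro i _
    rw [hCrs i, husersY P hP i]
    split_ifs with h
    · simp [linCost]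
    · simp [linCost]
  set Qopt : Fin n → Finset (Fin (n+1)) :=
    fun i => if i = istar then {Fin.succ i} else {0} with hQdef
  have hQfeas : ∀ i, Qopt i ∈ Strat i := by
    intro i
    simp only [hQdef, hSdef]
    split_ifs with h
    · exact Set.mem_insert_of_mem _ rfl
    · exact Set.mem_insert _ _
  have hQite : ∀ i, (if Qopt i = {Fin.succ i} then a i else 0) =
      if i = istar then a istar else 0 := by
    intro i
    by_cases h : i = istar
    · subst h
      simp only [hQdef, if_pos rfl]
    · simp only [hQdef, if_neg h]
      have hne : ({0} : Finset (Fin (n+1))) ≠ {Fin.succ i} := by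
        intro hcon
        exact (Fin.succ_ne_zero i) (Finset.singleton_injective hcon).symm
      rw [if_neg hne]
  have hQ0ne : users Qopt 0 ≠ Finset.univ := by
    rw [husers0 Qopt hQfeas]
    intro h
    have h1 : istar ∈ Finset.univ.filter (fun j => Qopt j = ({0} : Finset (Fin (n+1)))) := by
      rw [h]; exact Finset.mem_univ _
    have h2 : Qopt istar = {0} := (Finset.mem_filter.1 h1).2
    simp only [hQdef, if_pos rfl] at h2
    exact (Fin.succ_ne_zero istar) (Finset.singleton_injective h2)
  have hQsoc : socCost Cr Qopt = a istar := by
    rw [hsoc Qopt hQfeas]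
    have hstepQ : stepCost n (users Qopt 0) = 0 := by simp [stepCost, hQ0ne]
    rw [hstepQ, zero_add, Finset.sum_congr rfl (fun i _ => hQite i),
      Finset.sum_ite_eq' Finset.univ istar (fun _ => a istar)]
    simp
  have hsum_nonneg : ∀ (P : Fin n → Finset (Fin (n+1))), ∀ i ∈ Finset.univ,
      (0:ℝ) ≤ if P i = {Fin.succ i} then a i else 0 := by
    intro P i _
    split_ifs
    · exact (ha0 i).le
    · exact le_refl 0
  have hQmin : ∀ Q, (∀ i, Q i ∈ Strat i) → socCost Cr Qopt ≤ socCost Cr Q := by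
    intro Q hQ
    rw [hQsoc, hsoc Q hQ]
    have hstep_nonneg : 0 ≤ stepCost n (users Q 0) := hCzfn.2.1 _
    by_cases hall : ∀ i, Q i = ({0} : Finset (Fin (n+1)))
    · have hu : users Q 0 = Finset.univ := by
        rw [husers0 Q hQ]
        apply Finset.eq_univ_of_forall
        intro j
        exact Finset.mem_filter.2 ⟨Finset.mem_univ j, hall j⟩
      have h1 : stepCost n (users Q 0) = 1 := by rw [hu]; simp [stepCost]
      rw [h1]
      have hs := Finset.sum_nonneg (hsum_nonneg Q)
      linarith [hstar1]
    · push_neg at hall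
      obtain ⟨j, hj⟩ := hall
      have hjy : Q j = {Fin.succ j} := (hmem Q hQ j).resolve_left hj
      have h1 : a istar ≤ (if Q j = {Fin.succ j} then a j else 0) := by
        rw [if_pos hjy]
        exact hastar_le j
      have h2 : (if Q j = {Fin.succ j} then a j else 0) ≤
          ∑ i, (if Q i = {Fin.succ i} then a i else 0) :=
        Finset.single_le_sum (hsum_nonneg Q) (Finset.mem_univ j)
      linarith
  refine ⟨n+1, Strat, Cr, ?_, ?_, ?_, ?_, Qopt, hQfeas, hQmin, ?_, ?_⟩
  · intro i
    exact ⟨{0}, by simp [hSdef]⟩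
  · intro r
    simp only [hCrdef]
    split_ifs with h
    · exact hCzfn
    · exact hlinfn _
  · intro r
    simp only [hCrdef]
    split_ifs with h
    · exact stepCost_anonymous n
    · exact linCost_anonymous n _
  · intro r
    simp only [hCrdef]
    split_ifs with h
    · exact stepCost_convex n
    · exact linCost_convex n _
  · rw [hQsoc]
    exact ha0 istar
  · intro P hPNE
    have hall := hPNE_all P hPNE
    have hu : users P 0 = Finset.univ := by
      rw [husers0 P hPNE.1]
      apply Finset.eq_univ_of_forall
      intro j
      exact Finset.mem_filter.2 ⟨Finset.mem_univ j, hall j⟩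
    have hney : ∀ i : Fin n, P i ≠ {Fin.succ i} := by
      intro i hcon
      rw [hall i] at hcon
      exact (Fin.succ_ne_zero i) (Finset.singleton_injective hcon).symm
    have hsocP : socCost Cr P = 1 := by
      rw [hsoc P hPNE.1, hu]
      have h0 : ∑ i : Fin n, (if P i = {Fin.succ i} then a i else 0) = 0 :=
        Finset.sum_eq_zero (fun i _ => by rw [if_neg (hney i)])
      rw [h0]
      simp [stepCost]
    rw [hsocP, hQsoc, hastar]
    have hq_le : q istar ≤ 1 / (n:ℝ) := by
      rw [le_div_iff₀ hnR0]
      linarith [hqstar]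
    have hmono : ((n:ℝ) - ε) * (q istar + δ) ≤ ((n:ℝ) - ε) * (1/(n:ℝ) + δ) := by
      apply mul_le_mul_of_nonneg_left (by linarith) (by linarith)
    have heq : ((n:ℝ) - ε) * (1/(n:ℝ) + ε/(n:ℝ)^2) = 1 - ε^2/(n:ℝ)^2 := by
      field_simp
      ring
    have hpos : (0:ℝ) ≤ ε^2/(n:ℝ)^2 := by positivity
    calc ((n:ℝ) - ε) * (q istar + δ) ≤ ((n:ℝ) - ε) * (1/(n:ℝ) + δ) := hmono
      _ = ((n:ℝ) - ε) * (1/(n:ℝ) + ε/(n:ℝ)^2) := by rw [hδdef]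
      _ = 1 - ε^2/(n:ℝ)^2 := heq
      _ ≤ 1 := by linarith
end

section
/- For every uniform, budget-balanced, stable cost sharing protocol ξ on the player set N = {1,2} and every real a ≥ 1, there exists a 2-player resource allocation model with anonymous convex cost functions such that, in the induced cost sharing game with cost shares given by ξ, there is a pure Nash equilibrium P and a socially optimal strategy vector Q̂ with C(Q̂) > 0 and C(P) ≥ a · C(Q̂). Consequently, no uniform cost sharing protocol achieves a bounded price of anarchy on 2-player games with anonymous convex cost functions. -/
open Finset

def FC (K : ℝ) : Finset (Fin 2) → ℝ := fun T => if T.card ≤ 1 then (T.card : ℝ) else K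
def DC : Finset (Fin 2) → ℝ := fun T => 2 * (T.card : ℝ)

lemma FC_empty (K : ℝ) : FC K ∅ = 0 := by simp [FC]
lemma FC_single (K : ℝ) (i : Fin 2) : FC K {i} = 1 := by simp [FC]
lemma FC_univ (K : ℝ) : FC K Finset.univ = K := by norm_num [FC]
lemma DC_empty : DC ∅ = 0 := by simp [DC]
lemma DC_single (i : Fin 2) : DC {i} = 2 := by norm_num [DC]

lemma card_le_one_of_notmem {Y : Finset (Fin 2)} {i : Fin 2} (h : i ∉ Y) : Y.card ≤ 1 := by
  have hsub : Y ⊆ Finset.univ.erase i :=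
    fun x hx => Finset.mem_erase.2 ⟨fun e => h (e ▸ hx), Finset.mem_univ x⟩
  have := Finset.card_le_card hsub
  simpa using this

lemma FC_isCostFn {K : ℝ} (hK : 2 ≤ K) : IsCostFn 2 (FC K) := by
  refine ⟨FC_empty K, fun T => ?_, fun T U hTU => ?_⟩
  · unfold FC; split_ifs with h
    · positivity
    · linarith
  · have hc : T.card ≤ U.card := Finset.card_le_card hTU
    unfold FC; split_ifs with h1 h2 h2
    · exact_mod_cast hc
    · have : (T.card : ℝ) ≤ 1 := by exact_mod_cast h1
      linarith
    · omega
    · exact le_refl _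

lemma FC_anon (K : ℝ) : AnonymousCost 2 (FC K) := by
  intro X Y h; simp only [FC, h]

lemma FC_convex {K : ℝ} (hK : 2 ≤ K) : ConvexCost 2 (FC K) := by
  intro X Y i hXY hiY
  have hiX : i ∉ X := fun h => hiY (hXY h)
  have hY1 : Y.card ≤ 1 := card_le_one_of_notmem hiY
  have hXle : X.card ≤ Y.card := Finset.card_le_card hXY
  have hcX : (insert i X).card = X.card + 1 := Finset.card_insert_of_notMem hiX
  have hcY : (insert i Y).card = Y.card + 1 := Finset.card_insert_of_notMem hiY
  have hx := Nat.le_one_iff_eq_zero_or_eq_one.mp (le_trans hXle hY1)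
  have hy := Nat.le_one_iff_eq_zero_or_eq_one.mp hY1
  unfold FC
  rcases hx with hx | hx <;> rcases hy with hy | hy <;>
    simp [hcX, hcY, hx, hy] <;> linarith

lemma DC_isCostFn : IsCostFn 2 DC := by
  refine ⟨DC_empty, fun T => by simp [DC], fun T U h => ?_⟩
  have h1 : T.card ≤ U.card := Finset.card_le_card h
  have h2 : (T.card : ℝ) ≤ U.card := by exact_mod_cast h1
  unfold DC
  linarith

lemma DC_anon : AnonymousCost 2 DC := by intro X Y h; simp only [DC, h]

lemma DC_convex : ConvexCost 2 DC := by
  intro X Y i hXY hiY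
  have hiX : i ∉ X := fun h => hiY (hXY h)
  simp [DC, Finset.card_insert_of_notMem hiX, Finset.card_insert_of_notMem hiY]
  ring_nf
  norm_num

lemma privCost_pair (ξ : Protocol 2) (Cr : Fin 5 → Finset (Fin 2) → ℝ)
    (P : Fin 2 → Finset (Fin 5)) (i : Fin 2) (r1 r2 : Fin 5)
    (h : P i = {r1, r2}) (hne : r1 ≠ r2) :
    privCost ξ Cr P i = ξ (Cr r1) (users P r1) i + ξ (Cr r2) (users P r2) i := by
  unfold privCost; rw [h, Finset.sum_pair hne]

lemma socCost_eval (Cr : Fin 5 → Finset (Fin 2) → ℝ) (P : Fin 2 → Finset (Fin 5)) :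
    socCost Cr P = Cr 0 (users P 0) + Cr 1 (users P 1) + Cr 2 (users P 2)
      + Cr 3 (users P 3) + Cr 4 (users P 4) := by
  unfold socCost; rw [Fin.sum_univ_five]

/-- No uniform cost sharing protocol achieves a bounded price of anarchy on
2-player games with anonymous convex costs. -/
theorem uniform_poa_unbounded
    (ξ : Protocol 2) (hξ : ValidShares ξ) (hbb : BudgetBalanced ξ)
    (hstable : StableProtocol ξ)
    (a : ℝ) (ha : 1 ≤ a) :
    ∃ (m : ℕ) (Strat : Fin 2 → Set (Finset (Fin m)))
      (Cr : Fin m → Finset (Fin 2) → ℝ),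
      (∀ i, (Strat i).Nonempty) ∧ (∀ r, IsCostFn 2 (Cr r)) ∧
      (∀ r, AnonymousCost 2 (Cr r)) ∧ (∀ r, ConvexCost 2 (Cr r)) ∧
      ∃ (P Qopt : Fin 2 → Finset (Fin m)),
        isPNE Strat ξ Cr P ∧
        (∀ i, Qopt i ∈ Strat i) ∧
        (∀ Q : Fin 2 → Finset (Fin m), (∀ i, Q i ∈ Strat i) →
          socCost Cr Qopt ≤ socCost Cr Q) ∧
        0 < socCost Cr Qopt ∧
        a * socCost Cr Qopt ≤ socCost Cr P := by
  classical
  have hK2 : (2:ℝ) ≤ 6 * a := by linarith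
  set K : ℝ := 6 * a with hK
  set Cr : Fin 5 → Finset (Fin 2) → ℝ := ![FC K, FC K, FC K, DC, DC] with hCr
  set Strat : Fin 2 → Set (Finset (Fin 5)) :=
    fun i => if i = 0 then ({({0,2} : Finset (Fin 5)), ({1,3} : Finset (Fin 5))} : Set _)
             else ({({0,1} : Finset (Fin 5)), ({2,4} : Finset (Fin 5))} : Set _) with hStrat
  set P : Fin 2 → Finset (Fin 5) := ![{0,2}, {0,1}] with hP
  set Qo : Fin 2 → Finset (Fin 5) := ![{1,3}, {2,4}] with hQo
  have hcf : IsCostFn 2 (FC K) := FC_isCostFn hK2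
  -- budget balance facts
  have hs0 : ξ (FC K) {0} 0 = 1 := by
    have := hbb (FC K) hcf {0}
    simpa [FC_single] using this
  have hs1 : ξ (FC K) {1} 1 = 1 := by
    have := hbb (FC K) hcf {1}
    simpa [FC_single] using this
  have hd0 : ξ DC {0} 0 = 2 := by
    have := hbb DC DC_isCostFn {0}
    simpa [DC_single] using this
  have hd1 : ξ DC {1} 1 = 2 := by
    have := hbb DC DC_isCostFn {1}
    simpa [DC_single] using this
  -- users computations for P
  have hu0 : users P 0 = Finset.univ := by decide
  have hu1 : users P 1 = {1} := by decide
  have hu2 : users P 2 = {0} := by decide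
  have hu3 : users P 3 = ∅ := by decide
  have hu4 : users P 4 = ∅ := by decide
  refine ⟨5, Strat, Cr, ?_, ?_, ?_, ?_, P, Qo, ?_, ?_, ?_, ?_, ?_⟩
  · intro i; fin_cases i
    · exact ⟨{0,2}, by simp [hStrat]⟩
    · exact ⟨{0,1}, by simp [hStrat]⟩
  · intro r; fin_cases r
    · exact hcf
    · exact hcf
    · exact hcf
    · exact DC_isCostFn
    · exact DC_isCostFn
  · intro r; fin_cases r
    · exact FC_anon K
    · exact FC_anon K
    · exact FC_anon K
    · exact DC_anon
    · exact DC_anon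
  · intro r; fin_cases r
    · exact FC_convex hK2
    · exact FC_convex hK2
    · exact FC_convex hK2
    · exact DC_convex
    · exact DC_convex
  · -- isPNE
    constructor
    · intro i; fin_cases i
      · show P 0 ∈ Strat 0; simp [hStrat, hP]
      · show P 1 ∈ Strat 1; simp [hStrat, hP]
    · intro i Q hQ; fin_cases i
      · show privCost ξ Cr P 0 ≤ privCost ξ Cr (Function.update P 0 Q) 0
        have hQ' : Q = {0,2} ∨ Q = {1,3} := by
          simpa [hStrat] using hQ
        rcases hQ' with rfl | rfl
        · have : Function.update P (0 : Fin 2) ({0,2} : Finset (Fin 5)) = P := by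
            funext j; fin_cases j <;> simp [hP]
          rw [this]
        · have hupd : Function.update P (0 : Fin 2) ({1,3} : Finset (Fin 5))
              = ![({1,3} : Finset (Fin 5)), {0,1}] := by
            funext j; fin_cases j <;> simp [hP]
          rw [hupd]
          have e1 : privCost ξ Cr P 0 = ξ (FC K) Finset.univ 0 + 1 := by
            rw [privCost_pair ξ Cr P 0 0 2 (by simp [hP]) (by decide), hu0, hu2]
            show ξ (FC K) Finset.univ 0 + ξ (FC K) {0} 0 = _
            rw [hs0]
          have e2 : privCost ξ Cr ![({1,3} : Finset (Fin 5)), {0,1}] 0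
              = ξ (FC K) Finset.univ 0 + 2 := by
            rw [privCost_pair ξ Cr _ 0 1 3 rfl (by decide)]
            rw [show users ![({1,3} : Finset (Fin 5)), {0,1}] 1 = Finset.univ from by decide]
            rw [show users ![({1,3} : Finset (Fin 5)), {0,1}] 3 = {0} from by decide]
            show ξ (FC K) Finset.univ 0 + ξ DC {0} 0 = _
            rw [hd0]
          rw [e1, e2]; linarith
      · show privCost ξ Cr P 1 ≤ privCost ξ Cr (Function.update P 1 Q) 1
        have hQ' : Q = {0,1} ∨ Q = {2,4} := by
          simpa [hStrat] using hQ
        rcases hQ' with rfl | rfl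
        · have : Function.update P (1 : Fin 2) ({0,1} : Finset (Fin 5)) = P := by
            funext j; fin_cases j <;> simp [hP]
          rw [this]
        · have hupd : Function.update P (1 : Fin 2) ({2,4} : Finset (Fin 5))
              = ![({0,2} : Finset (Fin 5)), {2,4}] := by
            funext j; fin_cases j <;> simp [hP]
          rw [hupd]
          have e1 : privCost ξ Cr P 1 = ξ (FC K) Finset.univ 1 + 1 := by
            rw [privCost_pair ξ Cr P 1 0 1 (by simp [hP]) (by decide), hu0, hu1]
            show ξ (FC K) Finset.univ 1 + ξ (FC K) {1} 1 = _
            rw [hs1]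
          have e2 : privCost ξ Cr ![({0,2} : Finset (Fin 5)), {2,4}] 1
              = ξ (FC K) Finset.univ 1 + 2 := by
            rw [privCost_pair ξ Cr _ 1 2 4 rfl (by decide)]
            rw [show users ![({0,2} : Finset (Fin 5)), {2,4}] 2 = Finset.univ from by decide]
            rw [show users ![({0,2} : Finset (Fin 5)), {2,4}] 4 = {1} from by decide]
            show ξ (FC K) Finset.univ 1 + ξ DC {1} 1 = _
            rw [hd1]
          rw [e1, e2]; linarith
  · intro i; fin_cases i
    · show Qo 0 ∈ Strat 0; simp [hStrat, hQo]
    · show Qo 1 ∈ Strat 1; simp [hStrat, hQo]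
  · -- optimality
    have sQo : socCost Cr Qo = 6 := by
      rw [socCost_eval]
      rw [show users Qo 0 = ∅ from by decide, show users Qo 1 = {0} from by decide,
          show users Qo 2 = {1} from by decide, show users Qo 3 = {0} from by decide,
          show users Qo 4 = {1} from by decide]
      show FC K ∅ + FC K {0} + FC K {1} + DC {0} + DC {1} = 6
      rw [FC_empty, FC_single, FC_single, DC_single, DC_single]; norm_num
    intro Q hQmem
    have h0 : Q 0 = {0,2} ∨ Q 0 = {1,3} := by simpa [hStrat] using hQmem 0
    have h1 : Q 1 = {0,1} ∨ Q 1 = {2,4} := by simpa [hStrat] using hQmem 1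
    have hQeq : Q = ![Q 0, Q 1] := by funext j; fin_cases j <;> rfl
    rw [sQo, hQeq]
    rcases h0 with h0 | h0 <;> rcases h1 with h1 | h1 <;> rw [h0, h1]
    · rw [socCost_eval]
      rw [show users ![({0,2} : Finset (Fin 5)), {0,1}] 0 = Finset.univ from by decide,
          show users ![({0,2} : Finset (Fin 5)), {0,1}] 1 = {1} from by decide,
          show users ![({0,2} : Finset (Fin 5)), {0,1}] 2 = {0} from by decide,
          show users ![({0,2} : Finset (Fin 5)), {0,1}] 3 = ∅ from by decide,
          show users ![({0,2} : Finset (Fin 5)), {0,1}] 4 = ∅ from by decide]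
      show (6:ℝ) ≤ FC K Finset.univ + FC K {1} + FC K {0} + DC ∅ + DC ∅
      rw [FC_univ, FC_single, FC_single, DC_empty]; linarith
    · rw [socCost_eval]
      rw [show users ![({0,2} : Finset (Fin 5)), {2,4}] 0 = {0} from by decide,
          show users ![({0,2} : Finset (Fin 5)), {2,4}] 1 = ∅ from by decide,
          show users ![({0,2} : Finset (Fin 5)), {2,4}] 2 = Finset.univ from by decide,
          show users ![({0,2} : Finset (Fin 5)), {2,4}] 3 = ∅ from by decide,
          show users ![({0,2} : Finset (Fin 5)), {2,4}] 4 = {1} from by decide]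
      show (6:ℝ) ≤ FC K {0} + FC K ∅ + FC K Finset.univ + DC ∅ + DC {1}
      rw [FC_univ, FC_single, FC_empty, DC_empty, DC_single]; linarith
    · rw [socCost_eval]
      rw [show users ![({1,3} : Finset (Fin 5)), {0,1}] 0 = {1} from by decide,
          show users ![({1,3} : Finset (Fin 5)), {0,1}] 1 = Finset.univ from by decide,
          show users ![({1,3} : Finset (Fin 5)), {0,1}] 2 = ∅ from by decide,
          show users ![({1,3} : Finset (Fin 5)), {0,1}] 3 = {0} from by decide,
          show users ![({1,3} : Finset (Fin 5)), {0,1}] 4 = ∅ from by decide]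
      show (6:ℝ) ≤ FC K {1} + FC K Finset.univ + FC K ∅ + DC {0} + DC ∅
      rw [FC_univ, FC_single, FC_empty, DC_empty, DC_single]; linarith
    · rw [socCost_eval]
      rw [show users ![({1,3} : Finset (Fin 5)), {2,4}] 0 = ∅ from by decide,
          show users ![({1,3} : Finset (Fin 5)), {2,4}] 1 = {0} from by decide,
          show users ![({1,3} : Finset (Fin 5)), {2,4}] 2 = {1} from by decide,
          show users ![({1,3} : Finset (Fin 5)), {2,4}] 3 = {0} from by decide,
          show users ![({1,3} : Finset (Fin 5)), {2,4}] 4 = {1} from by decide]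
      show (6:ℝ) ≤ FC K ∅ + FC K {0} + FC K {1} + DC {0} + DC {1}
      rw [FC_empty, FC_single, FC_single, DC_single, DC_single]; norm_num
  · -- positivity
    have sQo : socCost Cr Qo = 6 := by
      rw [socCost_eval]
      rw [show users Qo 0 = ∅ from by decide, show users Qo 1 = {0} from by decide,
          show users Qo 2 = {1} from by decide, show users Qo 3 = {0} from by decide,
          show users Qo 4 = {1} from by decide]
      show FC K ∅ + FC K {0} + FC K {1} + DC {0} + DC {1} = 6
      rw [FC_empty, FC_single, FC_single, DC_single, DC_single]; norm_num
    rw [sQo]; norm_num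
  · -- ratio
    have sQo : socCost Cr Qo = 6 := by
      rw [socCost_eval]
      rw [show users Qo 0 = ∅ from by decide, show users Qo 1 = {0} from by decide,
          show users Qo 2 = {1} from by decide, show users Qo 3 = {0} from by decide,
          show users Qo 4 = {1} from by decide]
      show FC K ∅ + FC K {0} + FC K {1} + DC {0} + DC {1} = 6
      rw [FC_empty, FC_single, FC_single, DC_single, DC_single]; norm_num
    have sP : socCost Cr P = K + 2 := by
      rw [socCost_eval, hu0, hu1, hu2, hu3, hu4]
      show FC K Finset.univ + FC K {1} + FC K {0} + DC ∅ + DC ∅ = K + 2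
      rw [FC_univ, FC_single, FC_single, DC_empty]; ring
    rw [sQo, sP, hK]; linarith
end
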